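/- Let a, c > 0 and b, d < 0 with −b/a = −d/c =: x_A. Define the sequence of polynomials Wₙ by W₀ = 1, W₁(z) = z, Wₙ = (az+b)Wₙ₋₁ + (cz+d)Wₙ₋₂, and set Uₙ(z) = Wₙ(z)/(az+b)^⌊n/2⌋. Then each Uₙ is a polynomial of degree ⌈n/2⌉, and the sequence satisfies U₀ = 1, U₁(z) = z, Uₙ = Uₙ₋₁ + (c/a)·Uₙ₋₂ for even n, and Uₙ = (az+b)Uₙ₋₁ + (c/a)·Uₙ₋₂ for odd n ≥ 3. -/

import Mathlib

open Polynomial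

noncomputable def Vaux (a b r : ℝ) : ℕ → Polynomial ℝ
  | 0 => 1
  | 1 => X
  | (n+2) => if Even n then Vaux a b r (n+1) + C r * Vaux a b r n
      else (C a * X + C b) * Vaux a b r (n+1) + C r * Vaux a b r n

open Polynomial in
theorem stmt_18 (a b c d : ℝ) (ha : 0 < a) (hc : 0 < c) (hb : b < 0) (hd : d < 0)
    (hAB : -b / a = -d / c)
    (W : ℕ → Polynomial ℝ) (h0 : W 0 = 1) (h1 : W 1 = X)
    (hrec : ∀ n, W (n + 2) = (C a * X + C b) * W (n + 1) + (C c * X + C d) * W n) :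
    (∀ n : ℕ, (C a * X + C b) ^ (n / 2) ∣ W n) ∧
    ∀ U : ℕ → Polynomial ℝ, (∀ n : ℕ, W n = (C a * X + C b) ^ (n / 2) * U n) →
      (U 0 = 1 ∧ U 1 = X ∧
        (∀ n : ℕ, (U n).degree = ((n + 1) / 2 : ℕ)) ∧
        (∀ n : ℕ, Even (n + 2) → U (n + 2) = U (n + 1) + C (c / a) * U n) ∧
        (∀ n : ℕ, Odd (n + 2) →
          U (n + 2) = (C a * X + C b) * U (n + 1) + C (c / a) * U n)) := by
  set p : Polynomial ℝ := C a * X + C b with hpdef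
  set r : ℝ := c / a with hrdef
  have hr : r ≠ 0 := (div_pos hc ha).ne'
  have hp1 : p.degree = 1 := degree_linear ha.ne'
  have hp : p ≠ 0 := by
    intro h
    rw [h, degree_zero] at hp1
    exact absurd hp1 (by simp)
  have hbc : b * c = d * a := by
    field_simp at hAB
    linarith
  have hd' : C c * X + C d = C r * p := by
    have hc' : c = r * a := by
      rw [hrdef]
      field_simp
    have hdd : d = r * b := by
      rw [hrdef]
      field_simp
      linarith
    rw [hpdef, hc', hdd]
    simp [C_mul]
    ring
  set V : ℕ → Polynomial ℝ := Vaux a b r with hV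
  have hW : ∀ n, W n = p ^ (n/2) * V n ∧ W (n+1) = p ^ ((n+1)/2) * V (n+1) := by
    intro n
    induction n with
    | zero => simp [h0, h1, hV, Vaux]
    | succ n ih =>
      refine ⟨ih.2, ?_⟩
      rw [hrec, ih.1, ih.2, hd']
      rcases Nat.even_or_odd n with ⟨m, hm⟩ | ⟨m, hm⟩
      · subst hm
        have e1 : (m + m)/2 = m := by omega
        have e2 : (m + m + 1)/2 = m := by omega
        have e3 : (m + m + 1 + 1)/2 = m + 1 := by omega
        have hVn : V (m + m + 2) = V (m + m + 1) + C r * V (m + m) := by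
          rw [hV]
          rw [show Vaux a b r (m+m+2) = if Even (m+m) then Vaux a b r (m+m+1) + C r * Vaux a b r (m+m)
            else (C a * X + C b) * Vaux a b r (m+m+1) + C r * Vaux a b r (m+m) from rfl]
          rw [if_pos ⟨m, rfl⟩]
        rw [e1, e2, show m + m + 1 + 1 = m + m + 2 from rfl, hVn, e3]
        ring
      · subst hm
        have e1 : (2*m + 1)/2 = m := by omega
        have e2 : (2*m + 1 + 1)/2 = m + 1 := by omega
        have e3 : (2*m + 1 + 1 + 1)/2 = m + 1 := by omega
        have hVn : V (2*m + 3) = p * V (2*m + 2) + C r * V (2*m + 1) := by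
          rw [hV]
          rw [show Vaux a b r (2*m+3) = if Even (2*m+1) then Vaux a b r (2*m+2) + C r * Vaux a b r (2*m+1)
            else (C a * X + C b) * Vaux a b r (2*m+2) + C r * Vaux a b r (2*m+1) from rfl]
          rw [if_neg (by simp [Nat.even_add_one, parity_simps])]
        rw [e1, e2, show 2*m + 1 + 1 + 1 = 2*m + 3 from rfl, hVn, e3]
        ring
  have hdeg : ∀ n, (V n).degree = (((n+1)/2 : ℕ) : WithBot ℕ) ∧
      (V (n+1)).degree = (((n+2)/2 : ℕ) : WithBot ℕ) := by
    intro n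
    induction n with
    | zero => simp [hV, Vaux]
    | succ n ih =>
      refine ⟨ih.2, ?_⟩
      rcases Nat.even_or_odd n with ⟨m, hm⟩ | ⟨m, hm⟩
      · subst hm
        have hVn : V (m + m + 2) = V (m + m + 1) + C r * V (m + m) := by
          rw [hV]
          rw [show Vaux a b r (m+m+2) = if Even (m+m) then Vaux a b r (m+m+1) + C r * Vaux a b r (m+m)
            else (C a * X + C b) * Vaux a b r (m+m+1) + C r * Vaux a b r (m+m) from rfl]
          rw [if_pos ⟨m, rfl⟩]
        have d1 : (V (m+m+1)).degree = ((m+1 : ℕ) : WithBot ℕ) := by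
          rw [ih.2]; congr 1; omega
        have d2 : (C r * V (m+m)).degree = ((m : ℕ) : WithBot ℕ) := by
          rw [degree_C_mul hr, ih.1]; congr 1; omega
        rw [hVn, degree_add_eq_left_of_degree_lt (by rw [d1, d2]; exact_mod_cast Nat.lt_succ_self m),
          d1]
        congr 1; omega
      · subst hm
        have hVn : V (2*m + 3) = p * V (2*m + 2) + C r * V (2*m + 1) := by
          rw [hV]
          rw [show Vaux a b r (2*m+3) = if Even (2*m+1) then Vaux a b r (2*m+2) + C r * Vaux a b r (2*m+1)
            else (C a * X + C b) * Vaux a b r (2*m+2) + C r * Vaux a b r (2*m+1) from rfl]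
          rw [if_neg (by simp [Nat.even_add_one, parity_simps])]
        have d1 : (p * V (2*m+2)).degree = ((m+2 : ℕ) : WithBot ℕ) := by
          rw [degree_mul, hp1, ih.2, show (2*m+1+2)/2 = m + 1 from by omega]
          push_cast
          ring
        have d2 : (C r * V (2*m+1)).degree = ((m+1 : ℕ) : WithBot ℕ) := by
          rw [degree_C_mul hr, ih.1]; congr 1; omega
        rw [hVn, degree_add_eq_left_of_degree_lt (by rw [d1, d2]; exact_mod_cast Nat.lt_succ_self (m+1)),
          d1]
        congr 1; omega
  constructor
  · exact fun n => ⟨V n, (hW n).1⟩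
  · intro U hU
    have hUV : ∀ n, U n = V n := fun n =>
      mul_left_cancel₀ (pow_ne_zero _ hp) (((hU n).symm.trans (hW n).1))
    refine ⟨by rw [hUV 0]; rfl, by rw [hUV 1]; rfl, fun n => by rw [hUV n]; exact (hdeg n).1, ?_, ?_⟩
    · intro n hn
      obtain ⟨m, hm⟩ : Even n := by
        rcases Nat.even_or_odd n with h | h
        · exact h
        · exfalso; rw [Nat.even_iff] at hn; rw [Nat.odd_iff] at h; omega
      subst hm
      rw [hUV (m+m+2), hUV (m+m+1), hUV (m+m), hV]
      rw [show Vaux a b r (m+m+2) = if Even (m+m) then Vaux a b r (m+m+1) + C r * Vaux a b r (m+m)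
        else (C a * X + C b) * Vaux a b r (m+m+1) + C r * Vaux a b r (m+m) from rfl]
      rw [if_pos ⟨m, rfl⟩]
    · intro n hn
      obtain ⟨m, hm⟩ : Odd n := by
        rcases Nat.even_or_odd n with h | h
        · exfalso; rw [Nat.odd_iff] at hn; rw [Nat.even_iff] at h; omega
        · exact h
      subst hm
      rw [hUV (2*m+1+2), hUV (2*m+1+1), hUV (2*m+1), hV]
      rw [show Vaux a b r (2*m+1+2) = if Even (2*m+1) then Vaux a b r (2*m+2) + C r * Vaux a b r (2*m+1)
        else (C a * X + C b) * Vaux a b r (2*m+2) + C r * Vaux a b r (2*m+1) from rfl]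
      rw [if_neg (by simp [Nat.even_add_one, parity_simps])]
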